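/- (Interior consistency of the scheme with the regularised equation.) Let d ≥ 1, 0 < λ ≤ Λ, ε > 0, θ ≥ 1. Fix Isaacs data with ellipticity constants (λ,Λ), let F(M) := sup_{α∈𝒜} inf_{β∈ℬ} (−Tr(A_{α,β} M)) be the Isaacs operator and F_h its discretisation. Let φ : ℝᵈ → ℝ be twice continuously differentiable, let f : ℝᵈ → ℝ be continuous, and let x ∈ ℝᵈ. Then for all sequences hₙ → 0⁺, yₙ → x and ξₙ → 0, ε(φ(yₙ) + ξₙ) + F_{hₙ} φ(yₙ) − f(yₙ)/(ε + |D_{hₙ} φ(yₙ)|²)^{θ/2} → ε φ(x) + F(D²φ(x)) − f(x)/(ε + ‖∇φ(x)‖²)^{θ/2} (note that F_{hₙ} and |D_{hₙ} · |² applied to φ + ξₙ coincide with those applied to φ, since both discretisations are invariant under adding constants). -/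

import Mathlib

open scoped BigOperators
open MeasureTheory
open scoped Classical

noncomputable section

namespace Paper

/-- `ℝᵈ` with the Euclidean structure. -/
abbrev E (d : ℕ) := EuclideanSpace ℝ (Fin d)

/-- The standard basis vector `eᵢ` of `ℝᵈ`. -/
def e (d : ℕ) (i : Fin d) : E d := EuclideanSpace.single i 1

/-- For a symmetric matrix, the maximum of the absolute values of its eigenvalues. -/
def specNorm {d : ℕ} (M : Matrix (Fin d) (Fin d) ℝ) : ℝ :=
  if h : M.IsHermitian then ⨆ i, |h.eigenvalues i| else 0

/-- `(λ,Λ)`-uniform ellipticity of `F : S(d) → ℝ`. -/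
def UniformlyElliptic (d : ℕ) (lam Lam : ℝ) (F : Matrix (Fin d) (Fin d) ℝ → ℝ) : Prop :=
  ∀ M N : Matrix (Fin d) (Fin d) ℝ, M.IsHermitian → N.PosSemidef →
    lam * specNorm N ≤ F M - F (M + N) ∧ F M - F (M + N) ≤ Lam * specNorm N

/-- The upwind discretisation `|D_h u (x)|²`. -/
def upwindSq (d : ℕ) (h : ℝ) (u : E d → ℝ) (x : E d) : ℝ :=
  (1 / h ^ 2) * ∑ i : Fin d,
    max (max (u x - u (x + h • e d i)) (u x - u (x - h • e d i))) 0 ^ 2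

/-- The monotone discretisation `L_h^A u (x)` of `Tr (A D²u)`. -/
def Lh (d : ℕ) (h : ℝ) (A : Matrix (Fin d) (Fin d) ℝ) (u : E d → ℝ) (x : E d) : ℝ :=
  (∑ i : Fin d, (A i i - ∑ j ∈ Finset.univ.erase i, |A i j|) *
      ((u (x + h • e d i) + u (x - h • e d i) - 2 * u x) / h ^ 2)) +
  ∑ i : Fin d, ∑ j ∈ Finset.univ.filter (fun j => i < j),
    (max (A i j) 0 *
        ((u (x + h • (e d i + e d j)) + u (x - h • (e d i + e d j)) - 2 * u x) / h ^ 2) +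
      max (-A i j) 0 *
        ((u (x + h • (e d i - e d j)) + u (x - h • (e d i - e d j)) - 2 * u x) / h ^ 2))

/-- Diagonal dominance of a matrix. -/
def DiagDominant {d : ℕ} (A : Matrix (Fin d) (Fin d) ℝ) : Prop :=
  ∀ i, ∑ j ∈ Finset.univ.erase i, |A i j| ≤ A i i

/-- Isaacs data with ellipticity constants `(λ, Λ)`: symmetric, diagonally dominant matrices
with `λ I ≤ A_{α,β} ≤ Λ I`. -/
def IsaacsData (d : ℕ) {ιA ιB : Type*} (lam Lam : ℝ)
    (A : ιA → ιB → Matrix (Fin d) (Fin d) ℝ) : Prop :=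
  ∀ a b, (A a b).IsHermitian ∧ DiagDominant (A a b) ∧
    (A a b - lam • (1 : Matrix (Fin d) (Fin d) ℝ)).PosSemidef ∧
    (Lam • (1 : Matrix (Fin d) (Fin d) ℝ) - A a b).PosSemidef

/-- Discretised Isaacs operator. -/
def Fh (d : ℕ) {ιA ιB : Type*} (h : ℝ) (A : ιA → ιB → Matrix (Fin d) (Fin d) ℝ)
    (u : E d → ℝ) (x : E d) : ℝ :=
  ⨆ a : ιA, ⨅ b : ιB, -(Lh d h (A a b) u x)

/-- A finite grid `Ω̄_h = Ω_h ∪ ∂Ω_h` whose interior points have all stencil points in the grid. -/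
structure Grid (d : ℕ) (h : ℝ) where
  interior : Finset (E d)
  boundary : Finset (E d)
  disj : Disjoint interior boundary
  nonempty : (interior ∪ boundary).Nonempty
  stencil_ax : ∀ x ∈ interior, ∀ i : Fin d,
    x + h • e d i ∈ interior ∪ boundary ∧ x - h • e d i ∈ interior ∪ boundary
  stencil_diag : ∀ x ∈ interior, ∀ i j : Fin d, i < j →
    x + h • (e d i + e d j) ∈ interior ∪ boundary ∧
    x - h • (e d i + e d j) ∈ interior ∪ boundary ∧
    x + h • (e d i - e d j) ∈ interior ∪ boundary ∧
    x - h • (e d i - e d j) ∈ interior ∪ boundary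

/-- The finite difference scheme `G_h` for the regularised pure degenerate equation. -/
def scheme (d : ℕ) {ιA ιB : Type*} {h : ℝ} (ε θ : ℝ)
    (A : ιA → ιB → Matrix (Fin d) (Fin d) ℝ) (G : Grid d h)
    (f g : E d → ℝ) (u : E d → ℝ) (x : E d) : ℝ :=
  if x ∈ G.interior then
    ε * u x + Fh d h A u x - f x / (ε + upwindSq d h u x) ^ (θ / 2)
  else u x - g x

/-- The finite difference scheme `G_h` for the regularised free transmission problem. -/
def schemeT (d : ℕ) {ιA ιB : Type*} {h : ℝ} (ε : ℝ) (θe : ℝ → ℝ)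
    (A : ιA → ιB → Matrix (Fin d) (Fin d) ℝ) (G : Grid d h)
    (f g : E d → ℝ) (u : E d → ℝ) (x : E d) : ℝ :=
  if x ∈ G.interior then
    ε * u x + Fh d h A u x - f x / (ε + upwindSq d h u x) ^ (θe (u x) / 2)
  else u x - g x

/-- The properties of the regularised degeneracy exponent `θ_ε` used in the transmission scheme. -/
def ThetaInterp (ε θ₁ θ₂ : ℝ) (θe : ℝ → ℝ) : Prop :=
  Monotone θe ∧ (∀ t, θ₁ ≤ θe t ∧ θe t ≤ θ₂) ∧
    (∀ t, t ≤ -ε → θe t = θ₁) ∧ (∀ t, ε ≤ t → θe t = θ₂)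

/-- The Hessian matrix of `φ : ℝᵈ → ℝ` at `x`. -/
def hessianMatrix (d : ℕ) (φ : E d → ℝ) (x : E d) : Matrix (Fin d) (Fin d) ℝ :=
  Matrix.of fun i j => fderiv ℝ (fun y => fderiv ℝ φ y (e d j)) x (e d i)

/-- The piecewise-linear interpolation `Θ_ε` between the degeneracy rates `θ₁` and `θ₂`. -/
def ThetaStep (θ₁ θ₂ ε t : ℝ) : ℝ :=
  if t ≤ -ε then θ₁
  else if t < ε then (θ₂ - θ₁) / (2 * ε) * t + (θ₁ + θ₂) / 2
  else θ₂

open Filter Metric Finset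

lemma firstDiff_tendsto {d : ℕ} {φ : E d → ℝ} (hφ : ContDiff ℝ 1 φ)
    (x : E d) (v : E d) (hs : ℕ → ℝ) (ys : ℕ → E d)
    (hpos : ∀ n, 0 < hs n) (hh : Tendsto hs atTop (nhds 0)) (hy : Tendsto ys atTop (nhds x)) :
    Tendsto (fun n => (φ (ys n + hs n • v) - φ (ys n)) / hs n) atTop
      (nhds (fderiv ℝ φ x v)) := by
  rw [Metric.tendsto_atTop]
  intro ε hε
  set εv : ℝ := ε / (2 * (‖v‖ + 1)) with hεv_def
  have hv1 : (0:ℝ) < ‖v‖ + 1 := by positivity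
  have hεv : 0 < εv := by positivity
  have hc : ContinuousAt (fderiv ℝ φ) x := (hφ.continuous_fderiv one_ne_zero).continuousAt
  obtain ⟨δ, hδpos, hδ⟩ := Metric.continuousAt_iff.mp hc εv hεv
  have h1 : ∀ᶠ n in atTop, dist (ys n) x < δ / 2 :=
    Metric.tendsto_nhds.mp hy _ (by positivity)
  have h2 : ∀ᶠ n in atTop, |hs n| < δ / (2 * (‖v‖ + 1)) := by
    have := Metric.tendsto_nhds.mp hh _ (show (0:ℝ) < δ / (2 * (‖v‖+1)) by positivity)
    simpa [Real.dist_eq] using this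
  obtain ⟨N, hN⟩ := (h1.and h2).exists_forall_of_atTop
  refine ⟨N, fun n hn => ?_⟩
  obtain ⟨hy', hh'⟩ := hN n hn
  set h := hs n with hh_def
  set y := ys n with hy_def
  have hhn : 0 < h := hpos n
  set L := fderiv ℝ φ x with hL
  -- both points in ball x δ
  have hsmul : ‖h • v‖ < δ / 2 := by
    rw [norm_smul, Real.norm_eq_abs]
    calc |h| * ‖v‖ ≤ |h| * (‖v‖ + 1) := by
          apply mul_le_mul_of_nonneg_left (by linarith) (abs_nonneg _)
      _ < (δ / (2 * (‖v‖ + 1))) * (‖v‖ + 1) := by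
          apply mul_lt_mul_of_pos_right hh' hv1
      _ = δ / 2 := by field_simp
  have hy_mem : y ∈ Metric.ball x δ := by
    simp only [Metric.mem_ball]; linarith
  have hyv_mem : y + h • v ∈ Metric.ball x δ := by
    simp only [Metric.mem_ball]
    calc dist (y + h • v) x ≤ dist (y + h • v) y + dist y x := dist_triangle _ _ _
      _ < δ / 2 + δ / 2 := by
          apply add_lt_add _ hy'
          simpa [dist_eq_norm] using hsmul
      _ = δ := by ring
  -- MVT on g z = φ z - L z
  have hmvt : ‖(φ (y + h • v) - L (y + h • v)) - (φ y - L y)‖ ≤ εv * ‖(y + h • v) - y‖ := by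
    apply Convex.norm_image_sub_le_of_norm_hasFDerivWithin_le
      (f' := fun z => fderiv ℝ φ z - L)
      (fun z _ => (((hφ.differentiable one_ne_zero z).hasFDerivAt).sub L.hasFDerivAt).hasFDerivWithinAt)
      (fun z hz => ?_) (convex_ball x δ) hy_mem hyv_mem
    have := hδ (Metric.mem_ball.mp hz)
    rw [dist_eq_norm] at this
    exact le_of_lt this
  have key : |φ (y + h • v) - φ y - h * L v| ≤ εv * (h * ‖v‖) := by
    have e1 : (φ (y + h • v) - L (y + h • v)) - (φ y - L y)
        = φ (y + h • v) - φ y - h * L v := by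
      have : L (y + h • v) = L y + h * L v := by
        rw [map_add, _root_.map_smul]; simp [smul_eq_mul]
      rw [this]; ring
    have e2 : ‖(y + h • v) - y‖ = h * ‖v‖ := by
      simp [norm_smul, Real.norm_eq_abs, abs_of_pos hhn]
    rw [e1, e2] at hmvt
    exact hmvt
  rw [Real.dist_eq]
  have e3 : (φ (y + h • v) - φ y) / h - L v = (φ (y + h • v) - φ y - h * L v) / h := by
    field_simp
  rw [e3, abs_div, abs_of_pos hhn]
  rw [div_lt_iff₀ hhn]
  calc |φ (y + h • v) - φ y - h * L v| ≤ εv * (h * ‖v‖) := key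
    _ < ε * h := by
        rw [hεv_def]
        rw [div_mul_eq_mul_div, div_lt_iff₀ (by positivity)]
        have : ‖v‖ < 2 * (‖v‖ + 1) := by linarith [norm_nonneg v]
        calc ε * (h * ‖v‖) < ε * (h * (2 * (‖v‖+1))) := by
              apply mul_lt_mul_of_pos_left _ hε
              exact mul_lt_mul_of_pos_left this hhn
          _ = ε * h * (2 * (‖v‖ + 1)) := by ring

set_option maxHeartbeats 2000000 in
lemma secondDiff_tendsto {d : ℕ} {φ : E d → ℝ} (hφ : ContDiff ℝ 2 φ)
    (x v : E d) (hs : ℕ → ℝ) (ys : ℕ → E d)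
    (hpos : ∀ n, 0 < hs n) (hh : Tendsto hs atTop (nhds 0)) (hy : Tendsto ys atTop (nhds x)) :
    Tendsto (fun n => (φ (ys n + hs n • v) + φ (ys n - hs n • v) - 2 * φ (ys n)) / (hs n)^2)
      atTop (nhds (fderiv ℝ (fderiv ℝ φ) x v v)) := by
  have hφd : Differentiable ℝ φ := hφ.differentiable (by norm_num)
  have hφ' : ContDiff ℝ 1 (fderiv ℝ φ) := hφ.fderiv_right (by norm_num)
  have hfd : Differentiable ℝ (fderiv ℝ φ) := hφ'.differentiable one_ne_zero
  set Q := fderiv ℝ (fderiv ℝ φ) with hQ_def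
  rw [Metric.tendsto_atTop]
  intro ε hε
  set εv : ℝ := ε / (2 * ‖v‖^2 + 1) with hεv_def
  have hεv : 0 < εv := by positivity
  have hc : ContinuousAt Q x := (hφ'.continuous_fderiv one_ne_zero).continuousAt
  obtain ⟨δ, hδpos, hδ⟩ := (Metric.continuousAt_iff (f := Q) (a := x)).mp hc εv hεv
  have h1 : ∀ᶠ n in atTop, dist (ys n) x < δ / 2 :=
    Metric.tendsto_nhds.mp hy _ (by positivity)
  have h2 : ∀ᶠ n in atTop, |hs n| < δ / (2 * (‖v‖ + 1)) := by
    have := Metric.tendsto_nhds.mp hh _ (show (0:ℝ) < δ / (2 * (‖v‖+1)) by positivity)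
    simpa [Real.dist_eq] using this
  obtain ⟨N, hN⟩ := (h1.and h2).exists_forall_of_atTop
  refine ⟨N, fun n hn => ?_⟩
  obtain ⟨hy', hh'⟩ := hN n hn
  set h := hs n with hh_def
  set y := ys n with hy_def
  have hhn : 0 < h := hpos n
  set q : ℝ := Q x v v with hq_def
  have hv1 : (0:ℝ) < ‖v‖ + 1 := by positivity
  have hsmul : h * ‖v‖ < δ / 2 := by
    calc h * ‖v‖ ≤ |h| * (‖v‖ + 1) := by
          rw [abs_of_pos hhn]
          exact mul_le_mul_of_nonneg_left (by linarith) (le_of_lt hhn)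
      _ < (δ / (2 * (‖v‖ + 1))) * (‖v‖ + 1) := mul_lt_mul_of_pos_right hh' hv1
      _ = δ / 2 := by field_simp
  -- membership of stencil points in the ball
  have hmem : ∀ t : ℝ, t ∈ Set.Icc 0 h → (y + t • v ∈ Metric.ball x δ ∧ y - t • v ∈ Metric.ball x δ) := by
    intro t ⟨ht0, hth⟩
    have hnt : ‖t • v‖ < δ / 2 := by
      rw [norm_smul, Real.norm_eq_abs, abs_of_nonneg ht0]
      calc t * ‖v‖ ≤ h * ‖v‖ := mul_le_mul_of_nonneg_right hth (norm_nonneg v)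
        _ < δ / 2 := hsmul
    constructor <;>
    · rw [Metric.mem_ball]
      refine lt_of_le_of_lt (dist_triangle _ y x) ?_
      rw [dist_eq_norm]
      have : ‖y + t • v - y‖ = ‖t • v‖ ∨ ‖y - t • v - y‖ = ‖t • v‖ := by
        constructor <;> simp [norm_neg]
      first
        | (have e : ‖y + t • v - y‖ = ‖t • v‖ := by simp
           rw [e]; linarith)
        | (have e : ‖y - t • v - y‖ = ‖t • v‖ := by
             have : y - t • v - y = -(t • v) := by abel
             rw [this, norm_neg]
           rw [e]; linarith)
  -- ψ and its Lipschitz bound on the ball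
  set ψ : E d → ℝ := fun z => fderiv ℝ φ z v - (Q x) z v with hψ_def
  have hψlip : ∀ z₁ ∈ Metric.ball x δ, ∀ z₂ ∈ Metric.ball x δ,
      ‖ψ z₁ - ψ z₂‖ ≤ (εv * ‖v‖) * ‖z₁ - z₂‖ := by
    intro z₁ hz₁ z₂ hz₂
    apply Convex.norm_image_sub_le_of_norm_hasFDerivWithin_le
      (f' := fun z => (ContinuousLinearMap.apply ℝ ℝ v).comp (Q z) -
        (ContinuousLinearMap.apply ℝ ℝ v).comp (Q x))
      (fun z _ => ?_) (fun z hz => ?_) (convex_ball x δ) hz₂ hz₁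
    · apply HasFDerivWithinAt.sub
      · exact (((ContinuousLinearMap.apply ℝ ℝ v).hasFDerivAt.comp z
          (hfd z).hasFDerivAt)).hasFDerivWithinAt
      · exact ((ContinuousLinearMap.apply ℝ ℝ v).comp (Q x)).hasFDerivAt.hasFDerivWithinAt
    · refine ContinuousLinearMap.opNorm_le_bound _ (by positivity) (fun u => ?_)
      have e1 : ((ContinuousLinearMap.apply ℝ ℝ v).comp (Q z) -
          (ContinuousLinearMap.apply ℝ ℝ v).comp (Q x)) u = ((Q z - Q x) u) v := by
        simp [ContinuousLinearMap.comp_apply, ContinuousLinearMap.sub_apply]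
      rw [e1]
      calc ‖((Q z - Q x) u) v‖ ≤ ‖(Q z - Q x) u‖ * ‖v‖ := ContinuousLinearMap.le_opNorm _ _
        _ ≤ (‖Q z - Q x‖ * ‖u‖) * ‖v‖ :=
            mul_le_mul_of_nonneg_right (ContinuousLinearMap.le_opNorm _ _) (norm_nonneg v)
        _ ≤ (εv * ‖u‖) * ‖v‖ := by
            apply mul_le_mul_of_nonneg_right _ (norm_nonneg v)
            apply mul_le_mul_of_nonneg_right _ (norm_nonneg u)
            have := hδ (Metric.mem_ball.mp hz)
            exact (dist_eq_norm (Q z) (Q x)).symm.le.trans this.le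
        _ = εv * ‖v‖ * ‖u‖ := by ring
  -- the 1-D function G and its derivative
  set G : ℝ → ℝ := fun t => φ (y + t • v) + φ (y - t • v) - 2 * φ y - t^2 * q with hG_def
  have hG' : ∀ t : ℝ, HasDerivAt G (ψ (y + t • v) - ψ (y - t • v)) t := by
    intro t
    have hlp : HasDerivAt (fun t : ℝ => y + t • v) v t := by
      simpa using ((hasDerivAt_id t).smul_const v).const_add y
    have hlm : HasDerivAt (fun t : ℝ => y - t • v) (-v) t := by
      simpa using ((hasDerivAt_id t).smul_const v).const_sub y
    have hA : HasDerivAt (fun t : ℝ => φ (y + t • v)) (fderiv ℝ φ (y + t • v) v) t :=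
      (hφd _).hasFDerivAt.comp_hasDerivAt t hlp
    have hB : HasDerivAt (fun t : ℝ => φ (y - t • v)) (-(fderiv ℝ φ (y - t • v) v)) t := by
      have hB0 := (hφd (y - t • v)).hasFDerivAt.comp_hasDerivAt t hlm
      rw [ContinuousLinearMap.map_neg] at hB0
      exact hB0
    have hC : HasDerivAt (fun t : ℝ => t^2 * q) (2 * t * q) t := by
      simpa using (hasDerivAt_pow 2 t).mul_const q
    have hD := ((hA.add hB).sub_const (2 * φ y)).sub hC
    refine hD.congr_deriv ?_
    have hq2 : (Q x) (y + t • v) v - (Q x) (y - t • v) v = 2 * t * q := by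
      simp only [map_add, map_sub, _root_.map_smul, ContinuousLinearMap.add_apply,
        ContinuousLinearMap.coe_sub', Pi.sub_apply, ContinuousLinearMap.coe_smul',
        Pi.smul_apply, smul_eq_mul, hq_def]
      ring
    rw [hψ_def]; simp only [ContinuousLinearMap.neg_apply]
    linarith [hq2]
  -- MVT on [0, h]
  have hbound : ∀ t ∈ Set.Ico (0:ℝ) h, ‖ψ (y + t • v) - ψ (y - t • v)‖ ≤ (εv * ‖v‖) * (2 * h * ‖v‖) := by
    intro t ht
    have htIcc : t ∈ Set.Icc (0:ℝ) h := ⟨ht.1, ht.2.le⟩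
    obtain ⟨hmp, hmm2⟩ := hmem t htIcc
    calc ‖ψ (y + t • v) - ψ (y - t • v)‖ ≤ (εv * ‖v‖) * ‖(y + t • v) - (y - t • v)‖ :=
          hψlip _ hmp _ hmm2
      _ ≤ (εv * ‖v‖) * (2 * h * ‖v‖) := by
          apply mul_le_mul_of_nonneg_left _ (by positivity)
          have ediff : (y + t • v) - (y - t • v) = (2*t) • v := by
            rw [two_mul, add_smul]; abel
          rw [ediff, norm_smul, Real.norm_eq_abs, abs_of_nonneg (by linarith [ht.1])]
          have : 2 * t ≤ 2 * h := by linarith [ht.2]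
          calc 2 * t * ‖v‖ ≤ 2 * h * ‖v‖ := mul_le_mul_of_nonneg_right this (norm_nonneg v)
            _ = 2 * h * ‖v‖ := rfl
  have hmvt := norm_image_sub_le_of_norm_deriv_le_segment'
    (f := G) (f' := fun t => ψ (y + t • v) - ψ (y - t • v)) (a := 0) (b := h)
    (C := (εv * ‖v‖) * (2 * h * ‖v‖))
    (fun t _ => (hG' t).hasDerivWithinAt) hbound h ⟨le_of_lt hhn, le_rfl⟩
  have hG0 : G 0 = 0 := by simp [hG_def]; ring
  have hGh : G h = (φ (y + h • v) + φ (y - h • v) - 2 * φ y) - h^2 * q := by simp [hG_def]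
  rw [hG0, sub_zero, hGh] at hmvt
  rw [Real.dist_eq]
  have hh2 : (0:ℝ) < h^2 := by positivity
  have e3 : (φ (y + h • v) + φ (y - h • v) - 2 * φ y) / h^2 - q
      = ((φ (y + h • v) + φ (y - h • v) - 2 * φ y) - h^2 * q) / h^2 := by field_simp
  rw [e3, abs_div, abs_of_pos hh2, div_lt_iff₀ hh2]
  calc |φ (y + h • v) + φ (y - h • v) - 2 * φ y - h ^ 2 * q|
      ≤ εv * ‖v‖ * (2 * h * ‖v‖) * (h - 0) := hmvt
    _ = (2 * ‖v‖^2) * εv * h^2 := by ring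
    _ < ε * h^2 := by
        apply mul_lt_mul_of_pos_right _ hh2
        rw [hεv_def, ← mul_div_assoc, div_lt_iff₀ (by positivity)]
        nlinarith [norm_nonneg v, sq_nonneg ‖v‖]

lemma iSupiInf_diff_le {ιA ιB : Type*} [Nonempty ιA] [Nonempty ιB]
    (f g : ιA → ιB → ℝ) (c C : ℝ) (hc : 0 ≤ c)
    (hfg : ∀ a b, |f a b - g a b| ≤ c) (hgC : ∀ a b, |g a b| ≤ C) :
    |(⨆ a, ⨅ b, f a b) - (⨆ a, ⨅ b, g a b)| ≤ c := by
  have hfg' : ∀ a b, g a b - c ≤ f a b ∧ f a b ≤ g a b + c := by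
    intro a b
    have := abs_le.mp (hfg a b); constructor <;> linarith [this.1, this.2]
  have hgC' : ∀ a b, -C ≤ g a b ∧ g a b ≤ C := fun a b => abs_le.mp (hgC a b)
  have hgb : ∀ a, BddBelow (Set.range (g a)) :=
    fun a => ⟨-C, by rintro y ⟨b, rfl⟩; exact (hgC' a b).1⟩
  have hfb : ∀ a, BddBelow (Set.range (f a)) :=
    fun a => ⟨-C - c, by rintro y ⟨b, rfl⟩; linarith [(hfg' a b).1, (hgC' a b).1]⟩
  have h1 : ∀ a, |(⨅ b, f a b) - (⨅ b, g a b)| ≤ c := by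
    intro a
    have hA : (⨅ b, f a b) - c ≤ ⨅ b, g a b :=
      le_ciInf fun b => by linarith [ciInf_le (hfb a) b, (hfg' a b).2]
    have hB : (⨅ b, g a b) - c ≤ ⨅ b, f a b :=
      le_ciInf fun b => by linarith [ciInf_le (hgb a) b, (hfg' a b).1]
    rw [abs_le]; constructor <;> linarith
  have hgI : ∀ a, |⨅ b, g a b| ≤ C := by
    intro a
    rw [abs_le]
    refine ⟨le_ciInf fun b => (hgC' a b).1, ?_⟩
    exact le_trans (ciInf_le (hgb a) (Classical.arbitrary ιB)) (hgC' a _).2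
  have hgA : BddAbove (Set.range fun a => ⨅ b, g a b) :=
    ⟨C, by rintro y ⟨a, rfl⟩; exact (abs_le.mp (hgI a)).2⟩
  have hfA : BddAbove (Set.range fun a => ⨅ b, f a b) := by
    refine ⟨C + c, ?_⟩
    rintro y ⟨a, rfl⟩
    have := abs_le.mp (h1 a)
    have := abs_le.mp (hgI a)
    simp only []
    linarith [(abs_le.mp (h1 a)).2, (abs_le.mp (hgI a)).2]
  have hSA : (⨆ a, ⨅ b, f a b) ≤ (⨆ a, ⨅ b, g a b) + c :=
    ciSup_le fun a => by linarith [le_ciSup hgA a, (abs_le.mp (h1 a)).2]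
  have hSB : (⨆ a, ⨅ b, g a b) ≤ (⨆ a, ⨅ b, f a b) + c :=
    ciSup_le fun a => by linarith [le_ciSup hfA a, (abs_le.mp (h1 a)).1]
  rw [abs_le]; constructor <;> linarith

lemma pair_sum {d : ℕ} (g : Fin d → Fin d → ℝ) :
    (∑ i, ∑ j ∈ Finset.univ.filter (fun j => i < j), (g i j + g j i))
      = ∑ i, ∑ j ∈ Finset.univ.erase i, g i j := by
  have e1 : ∀ i : Fin d, ∑ j ∈ Finset.univ.filter (fun j => i < j), (g i j + g j i)
      = ∑ j : Fin d, ((if i < j then g i j else 0) + (if i < j then g j i else 0)) := by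
    intro i
    rw [Finset.sum_filter]
    congr 1; funext j; split <;> simp
  have e2 : (∑ i, ∑ j : Fin d, if i < j then g j i else 0)
      = ∑ i, ∑ j : Fin d, if j < i then g i j else 0 := by
    rw [Finset.sum_comm]
  calc (∑ i, ∑ j ∈ Finset.univ.filter (fun j => i < j), (g i j + g j i))
      = (∑ i, ∑ j : Fin d, (if i < j then g i j else 0))
          + ∑ i, ∑ j : Fin d, (if i < j then g j i else 0) := by
        rw [← Finset.sum_add_distrib]
        exact Finset.sum_congr rfl fun i _ => by rw [e1 i, Finset.sum_add_distrib]
    _ = ∑ i, ∑ j : Fin d, ((if i < j then g i j else 0) + (if j < i then g i j else 0)) := by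
        rw [e2, ← Finset.sum_add_distrib]
        exact Finset.sum_congr rfl fun i _ => by rw [Finset.sum_add_distrib]
    _ = ∑ i, ∑ j : Fin d, (if j ≠ i then g i j else 0) := by
        refine Finset.sum_congr rfl fun i _ => Finset.sum_congr rfl fun j _ => ?_
        rcases lt_trichotomy i j with h | h | h
        · simp [h, not_lt_of_gt h, h.ne']
        · simp [h]
        · simp [h, not_lt_of_gt h, h.ne]
    _ = ∑ i, ∑ j ∈ Finset.univ.erase i, g i j := by
        refine Finset.sum_congr rfl fun i _ => ?_
        rw [← Finset.filter_ne', Finset.sum_filter]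

lemma trace_decomp {d : ℕ} (A M : Matrix (Fin d) (Fin d) ℝ)
    (hA : ∀ i j, A i j = A j i) (hM : ∀ i j, M i j = M j i) :
    (A * M).trace = (∑ i, (A i i - ∑ j ∈ Finset.univ.erase i, |A i j|) * M i i)
      + ∑ i, ∑ j ∈ Finset.univ.filter (fun j => i < j),
        (max (A i j) 0 * (M i i + M j j + 2 * M i j)
          + max (-A i j) 0 * (M i i + M j j - 2 * M i j)) := by
  have maxabs : ∀ a : ℝ, max a 0 + max (-a) 0 = |a| := by
    intro a; rcases le_total a 0 with h | h
    · simp [max_eq_right h, max_eq_left (neg_nonneg.mpr h), abs_of_nonpos h]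
    · simp [max_eq_left h, max_eq_right (neg_nonpos.mpr h), abs_of_nonneg h]
  have maxsub : ∀ a : ℝ, max a 0 - max (-a) 0 = a := by
    intro a; rcases le_total a 0 with h | h
    · simp [max_eq_right h, max_eq_left (neg_nonneg.mpr h)]
    · simp [max_eq_left h, max_eq_right (neg_nonpos.mpr h)]
  have keypt : ∀ i j : Fin d,
      max (A i j) 0 * (M i i + M j j + 2 * M i j)
        + max (-A i j) 0 * (M i i + M j j - 2 * M i j)
      = |A i j| * (M i i + M j j) + 2 * (A i j * M i j) := by
    intro i j
    have h1 := maxabs (A i j)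
    have h2 := maxsub (A i j)
    linear_combination (M i i + M j j) * h1 + (2 * M i j) * h2
  have step : (∑ i, ∑ j ∈ Finset.univ.filter (fun j => i < j),
      (max (A i j) 0 * (M i i + M j j + 2 * M i j)
        + max (-A i j) 0 * (M i i + M j j - 2 * M i j)))
      = (∑ i, ∑ j ∈ Finset.univ.erase i, (|A i j| * M i i + A i j * M i j)) := by
    rw [← pair_sum (fun i j => |A i j| * M i i + A i j * M i j)]
    refine Finset.sum_congr rfl fun i _ => Finset.sum_congr rfl fun j _ => ?_
    show _ = |A i j| * M i i + A i j * M i j + (|A j i| * M j j + A j i * M j i)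
    rw [keypt i j, hA j i, hM j i]
    ring
  have htr : (A * M).trace = ∑ i, ∑ j : Fin d, A i j * M i j := by
    rw [Matrix.trace]
    refine Finset.sum_congr rfl fun i _ => ?_
    rw [Matrix.diag_apply, Matrix.mul_apply]
    exact Finset.sum_congr rfl fun j _ => by rw [hM j i]
  rw [htr, step]
  have split : ∀ i : Fin d, (∑ j : Fin d, A i j * M i j)
      = A i i * M i i + ∑ j ∈ Finset.univ.erase i, A i j * M i j := by
    intro i
    exact (Finset.add_sum_erase Finset.univ (fun j => A i j * M i j) (Finset.mem_univ i)).symm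
  rw [← Finset.sum_add_distrib]
  refine Finset.sum_congr rfl fun i _ => ?_
  rw [split i, Finset.sum_add_distrib]
  have : ∑ j ∈ Finset.univ.erase i, |A i j| * M i i
      = (∑ j ∈ Finset.univ.erase i, |A i j|) * M i i := by
    rw [Finset.sum_mul]
  rw [this]
  ring

lemma est_sum {d : ℕ} {Lam : ℝ} (hLam : 0 ≤ Lam)
    (c : Fin d → ℝ) (cp cm : Fin d → Fin d → ℝ)
    (hc : ∀ i, 0 ≤ c i ∧ c i ≤ Lam)
    (hcp : ∀ i j, 0 ≤ cp i j ∧ cp i j ≤ Lam)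
    (hcm : ∀ i j, 0 ≤ cm i j ∧ cm i j ≤ Lam)
    (Da Qa : Fin d → ℝ) (Dp Qp Dm Qm : Fin d → Fin d → ℝ) :
    |(∑ i, c i * Da i + ∑ i, ∑ j ∈ Finset.univ.filter (fun j => i < j),
        (cp i j * Dp i j + cm i j * Dm i j))
      - (∑ i, c i * Qa i + ∑ i, ∑ j ∈ Finset.univ.filter (fun j => i < j),
        (cp i j * Qp i j + cm i j * Qm i j))|
    ≤ Lam * (∑ i, |Da i - Qa i| + ∑ i, ∑ j ∈ Finset.univ.filter (fun j => i < j),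
        (|Dp i j - Qp i j| + |Dm i j - Qm i j|)) := by
  have e1 : (∑ i, c i * Da i + ∑ i, ∑ j ∈ Finset.univ.filter (fun j => i < j),
        (cp i j * Dp i j + cm i j * Dm i j))
      - (∑ i, c i * Qa i + ∑ i, ∑ j ∈ Finset.univ.filter (fun j => i < j),
        (cp i j * Qp i j + cm i j * Qm i j))
      = (∑ i, c i * (Da i - Qa i)) + ∑ i, ∑ j ∈ Finset.univ.filter (fun j => i < j),
        (cp i j * (Dp i j - Qp i j) + cm i j * (Dm i j - Qm i j)) := by
    have h1 : (∑ i, c i * Da i) - (∑ i, c i * Qa i) = ∑ i, c i * (Da i - Qa i) := by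
      rw [← Finset.sum_sub_distrib]; exact Finset.sum_congr rfl fun i _ => by ring
    have h2 : (∑ i, ∑ j ∈ Finset.univ.filter (fun j => i < j),
          (cp i j * Dp i j + cm i j * Dm i j))
        - (∑ i, ∑ j ∈ Finset.univ.filter (fun j => i < j),
          (cp i j * Qp i j + cm i j * Qm i j))
        = ∑ i, ∑ j ∈ Finset.univ.filter (fun j => i < j),
          (cp i j * (Dp i j - Qp i j) + cm i j * (Dm i j - Qm i j)) := by
      rw [← Finset.sum_sub_distrib]
      refine Finset.sum_congr rfl fun i _ => ?_
      rw [← Finset.sum_sub_distrib]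
      exact Finset.sum_congr rfl fun j _ => by ring
    linarith [h1, h2]
  rw [e1]
  calc |(∑ i, c i * (Da i - Qa i)) + ∑ i, ∑ j ∈ Finset.univ.filter (fun j => i < j),
        (cp i j * (Dp i j - Qp i j) + cm i j * (Dm i j - Qm i j))|
      ≤ |∑ i, c i * (Da i - Qa i)| + |∑ i, ∑ j ∈ Finset.univ.filter (fun j => i < j),
        (cp i j * (Dp i j - Qp i j) + cm i j * (Dm i j - Qm i j))| := abs_add_le _ _
    _ ≤ (∑ i, Lam * |Da i - Qa i|) + ∑ i, ∑ j ∈ Finset.univ.filter (fun j => i < j),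
        (Lam * |Dp i j - Qp i j| + Lam * |Dm i j - Qm i j|) := by
      gcongr
      · calc |∑ i, c i * (Da i - Qa i)| ≤ ∑ i, |c i * (Da i - Qa i)| :=
            Finset.abs_sum_le_sum_abs _ _
          _ ≤ ∑ i, Lam * |Da i - Qa i| := by
            refine Finset.sum_le_sum fun i _ => ?_
            rw [abs_mul, abs_of_nonneg (hc i).1]
            exact mul_le_mul_of_nonneg_right (hc i).2 (abs_nonneg _)
      · calc |∑ i, ∑ j ∈ Finset.univ.filter (fun j => i < j),
            (cp i j * (Dp i j - Qp i j) + cm i j * (Dm i j - Qm i j))|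
            ≤ ∑ i, |∑ j ∈ Finset.univ.filter (fun j => i < j),
              (cp i j * (Dp i j - Qp i j) + cm i j * (Dm i j - Qm i j))| :=
            Finset.abs_sum_le_sum_abs _ _
          _ ≤ ∑ i, ∑ j ∈ Finset.univ.filter (fun j => i < j),
              (Lam * |Dp i j - Qp i j| + Lam * |Dm i j - Qm i j|) := by
            refine Finset.sum_le_sum fun i _ => ?_
            refine le_trans (Finset.abs_sum_le_sum_abs _ _) (Finset.sum_le_sum fun j _ => ?_)
            refine le_trans (abs_add_le _ _) ?_
            gcongr
            · rw [abs_mul, abs_of_nonneg (hcp i j).1]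
              exact mul_le_mul_of_nonneg_right (hcp i j).2 (abs_nonneg _)
            · rw [abs_mul, abs_of_nonneg (hcm i j).1]
              exact mul_le_mul_of_nonneg_right (hcm i j).2 (abs_nonneg _)
    _ = Lam * (∑ i, |Da i - Qa i| + ∑ i, ∑ j ∈ Finset.univ.filter (fun j => i < j),
        (|Dp i j - Qp i j| + |Dm i j - Qm i j|)) := by
      rw [mul_add, Finset.mul_sum, Finset.mul_sum]
      congr 1
      refine Finset.sum_congr rfl fun i _ => ?_
      rw [Finset.mul_sum]
      exact Finset.sum_congr rfl fun j _ => by ring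

lemma diag_le_Lam {d : ℕ} {Lam : ℝ} {A : Matrix (Fin d) (Fin d) ℝ}
    (h2 : (Lam • (1 : Matrix (Fin d) (Fin d) ℝ) - A).PosSemidef) (i : Fin d) :
    A i i ≤ Lam := by
  have h := h2.diag_nonneg (i := i)
  have h' : (0:ℝ) ≤ Lam - A i i := by
    simpa [dotProduct, Matrix.mulVec, Pi.single_apply, Matrix.sub_apply,
      Matrix.smul_apply, Matrix.one_apply] using h
  linarith

lemma lam_le_diag {d : ℕ} {lam : ℝ} {A : Matrix (Fin d) (Fin d) ℝ}
    (h1 : (A - lam • (1 : Matrix (Fin d) (Fin d) ℝ)).PosSemidef) (i : Fin d) :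
    lam ≤ A i i := by
  have h := h1.diag_nonneg (i := i)
  have h' : (0:ℝ) ≤ A i i - lam := by
    simpa [dotProduct, Matrix.mulVec, Pi.single_apply, Matrix.sub_apply,
      Matrix.smul_apply, Matrix.one_apply] using h
  linarith

lemma entry_abs_le {d : ℕ} {Lam : ℝ} {A : Matrix (Fin d) (Fin d) ℝ}
    (hD : DiagDominant A)
    (h2 : (Lam • (1 : Matrix (Fin d) (Fin d) ℝ) - A).PosSemidef)
    (hdiag_nonneg : ∀ i, 0 ≤ A i i) (i j : Fin d) :
    |A i j| ≤ Lam := by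
  rcases eq_or_ne j i with rfl | hne
  · rw [abs_of_nonneg (hdiag_nonneg j)]; exact diag_le_Lam h2 j
  · have hmem : j ∈ Finset.univ.erase i := Finset.mem_erase.mpr ⟨hne, Finset.mem_univ j⟩
    have h1 : |A i j| ≤ ∑ k ∈ Finset.univ.erase i, |A i k| :=
      Finset.single_le_sum (f := fun k => |A i k|) (fun k _ => abs_nonneg _) hmem
    exact h1.trans ((hD i).trans (diag_le_Lam h2 i))


lemma max_quot (a b h : ℝ) (hh : 0 < h) :
    max (max (a / h) (b / h)) 0 = (max (max a b) 0) / h := by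
  rw [eq_div_iff (ne_of_gt hh), max_mul_of_nonneg _ _ hh.le, max_mul_of_nonneg _ _ hh.le,
    zero_mul, div_mul_cancel₀ _ (ne_of_gt hh), div_mul_cancel₀ _ (ne_of_gt hh)]

set_option maxHeartbeats 2000000 in
/-- Interior consistency of the scheme with the regularised
equation: along `hₙ → 0⁺`, `yₙ → x`, `ξₙ → 0`, the discrete operator applied to a
`C²` test function converges to the continuous regularised operator at `x`. -/
theorem scheme_interior_consistent {d : ℕ} (hd : 1 ≤ d) (lam Lam ε θ : ℝ)
    (hlam : 0 < lam) (hlamLam : lam ≤ Lam) (hε : 0 < ε) (hθ : 1 ≤ θ)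
    {ιA ιB : Type*} [Nonempty ιA] [Nonempty ιB]
    (A : ιA → ιB → Matrix (Fin d) (Fin d) ℝ) (hA : IsaacsData d lam Lam A)
    (φ : E d → ℝ) (hφ : ContDiff ℝ 2 φ)
    (f : E d → ℝ) (hf : Continuous f) (x : E d)
    (hs : ℕ → ℝ) (ys : ℕ → E d) (ξs : ℕ → ℝ)
    (hpos : ∀ n, 0 < hs n)
    (hh : Filter.Tendsto hs Filter.atTop (nhds 0))
    (hy : Filter.Tendsto ys Filter.atTop (nhds x))
    (hξ : Filter.Tendsto ξs Filter.atTop (nhds 0)) :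
    Filter.Tendsto
      (fun n => ε * (φ (ys n) + ξs n) + Fh d (hs n) A φ (ys n)
        - f (ys n) / (ε + upwindSq d (hs n) φ (ys n)) ^ (θ / 2))
      Filter.atTop
      (nhds (ε * φ x + (⨆ a : ιA, ⨅ b : ιB, -((A a b) * hessianMatrix d φ x).trace)
        - f x / (ε + ‖gradient φ x‖ ^ 2) ^ (θ / 2))) := by
  classical
  have hφ1 : ContDiff ℝ 1 φ := hφ.of_le (by norm_num)
  have hφd : Differentiable ℝ φ := hφ.differentiable (by norm_num)
  have hfd : Differentiable ℝ (fderiv ℝ φ) :=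
    (hφ.fderiv_right (m := 1) (by norm_num)).differentiable one_ne_zero
  set Q : E d → E d →L[ℝ] E d →L[ℝ] ℝ := fderiv ℝ (fderiv ℝ φ) with hQdef
  set M : Matrix (Fin d) (Fin d) ℝ := hessianMatrix d φ x with hMdef
  have hMQ : ∀ i j, M i j = Q x (e d i) (e d j) := by
    intro i j
    have h : HasFDerivAt (fun y => fderiv ℝ φ y (e d j))
        ((ContinuousLinearMap.apply ℝ ℝ (e d j)).comp (Q x)) x :=
      (ContinuousLinearMap.apply ℝ ℝ (e d j)).hasFDerivAt.comp x (hfd x).hasFDerivAt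
    show fderiv ℝ (fun y => fderiv ℝ φ y (e d j)) x (e d i) = _
    rw [h.fderiv]; rfl
  have hQsymm : ∀ v w : E d, Q x v w = Q x w v := fun v w =>
    second_derivative_symmetric (fun y => (hφd y).hasFDerivAt) (hfd x).hasFDerivAt v w
  have hMsymm : ∀ i j, M i j = M j i := fun i j => by rw [hMQ, hMQ, hQsymm]
  have hQp : ∀ i j, Q x (e d i + e d j) (e d i + e d j) = M i i + M j j + 2 * M i j := by
    intro i j
    have h1 : Q x (e d i + e d j) (e d i + e d j)
        = Q x (e d i) (e d i) + Q x (e d i) (e d j)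
          + (Q x (e d j) (e d i) + Q x (e d j) (e d j)) := by
      simp only [map_add, ContinuousLinearMap.add_apply]
      ring
    rw [h1, ← hMQ i i, ← hMQ i j, ← hMQ j i, ← hMQ j j, hMsymm j i]; ring
  have hQm : ∀ i j, Q x (e d i - e d j) (e d i - e d j) = M i i + M j j - 2 * M i j := by
    intro i j
    have h1 : Q x (e d i - e d j) (e d i - e d j)
        = Q x (e d i) (e d i) - Q x (e d i) (e d j)
          - (Q x (e d j) (e d i) - Q x (e d j) (e d j)) := by
      simp only [map_sub, ContinuousLinearMap.sub_apply]
      ring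
    rw [h1, ← hMQ i i, ← hMQ i j, ← hMQ j i, ← hMQ j j, hMsymm j i]; ring
  -- Part 1 : the ε-term
  have T1 : Filter.Tendsto (fun n => ε * (φ (ys n) + ξs n)) Filter.atTop (nhds (ε * φ x)) := by
    have h1 : Filter.Tendsto (fun n => φ (ys n) + ξs n) Filter.atTop (nhds (φ x + 0)) :=
      (((hφ.continuous).tendsto x).comp hy).add hξ
    have := h1.const_mul ε
    simpa using this
  -- Part 2 : the Isaacs term
  set D : ℕ → E d → ℝ := fun n v =>
    (φ (ys n + hs n • v) + φ (ys n - hs n • v) - 2 * φ (ys n)) / (hs n) ^ 2 with hDdef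
  have hDt : ∀ v : E d, Filter.Tendsto (fun n => D n v) Filter.atTop (nhds (Q x v v)) :=
    fun v => secondDiff_tendsto hφ x v hs ys hpos hh hy
  set err : ℕ → ℝ := fun n =>
    (∑ i, |D n (e d i) - M i i|)
      + ∑ i, ∑ j ∈ Finset.univ.filter (fun j => i < j),
        (|D n (e d i + e d j) - (M i i + M j j + 2 * M i j)|
          + |D n (e d i - e d j) - (M i i + M j j - 2 * M i j)|) with herrdef
  have herr0 : ∀ n, 0 ≤ err n := by
    intro n
    apply add_nonneg (Finset.sum_nonneg fun i _ => abs_nonneg _)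
    exact Finset.sum_nonneg fun i _ => Finset.sum_nonneg fun j _ =>
      add_nonneg (abs_nonneg _) (abs_nonneg _)
  have habs : ∀ (v : E d) (q : ℝ), Q x v v = q →
      Filter.Tendsto (fun n => |D n v - q|) Filter.atTop (nhds 0) := by
    rintro v q rfl
    have h0 := (hDt v).sub_const (Q x v v)
    rw [sub_self] at h0
    simpa using h0.abs
  have herrt : Filter.Tendsto err Filter.atTop (nhds 0) := by
    have h1 : Filter.Tendsto (fun n => ∑ i, |D n (e d i) - M i i|) Filter.atTop (nhds 0) := by
      have := tendsto_finset_sum Finset.univ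
        (fun (i : Fin d) (_ : i ∈ Finset.univ) => habs (e d i) (M i i) (hMQ i i).symm)
      simpa using this
    have h2 : Filter.Tendsto (fun n => ∑ i, ∑ j ∈ Finset.univ.filter (fun j => i < j),
        (|D n (e d i + e d j) - (M i i + M j j + 2 * M i j)|
          + |D n (e d i - e d j) - (M i i + M j j - 2 * M i j)|)) Filter.atTop (nhds 0) := by
      have := tendsto_finset_sum (Finset.univ : Finset (Fin d))
        (fun i (_ : i ∈ Finset.univ) =>
          tendsto_finset_sum (Finset.univ.filter (fun j => i < j))
            (fun j _ => (habs (e d i + e d j) _ (hQp i j)).add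
              (habs (e d i - e d j) _ (hQm i j))))
      simpa using this
    simpa using h1.add h2
  have hLam0 : (0:ℝ) ≤ Lam := le_trans hlam.le hlamLam
  have hAsymm : ∀ a b i j, A a b i j = A a b j i := by
    intro a b i j
    simpa using ((hA a b).1.apply i j).symm
  have hAdiag0 : ∀ a b i, 0 ≤ A a b i i :=
    fun a b i => le_trans hlam.le (lam_le_diag (hA a b).2.2.1 i)
  have hAabs : ∀ a b i j, |A a b i j| ≤ Lam :=
    fun a b i j => entry_abs_le (hA a b).2.1 (hA a b).2.2.2 (hAdiag0 a b) i j
  have hest : ∀ n a b,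
      |(-(Lh d (hs n) (A a b) φ (ys n))) - (-((A a b * M).trace))| ≤ Lam * err n := by
    intro n a b
    have e0 : (-(Lh d (hs n) (A a b) φ (ys n))) - (-((A a b * M).trace))
        = -((Lh d (hs n) (A a b) φ (ys n)) - (A a b * M).trace) := by ring
    rw [e0, abs_neg]
    have hT := trace_decomp (A a b) M (hAsymm a b) hMsymm
    have hLhe : Lh d (hs n) (A a b) φ (ys n)
        = (∑ i, (A a b i i - ∑ j ∈ Finset.univ.erase i, |A a b i j|) * D n (e d i))
          + ∑ i, ∑ j ∈ Finset.univ.filter (fun j => i < j),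
            (max (A a b i j) 0 * D n (e d i + e d j)
              + max (-(A a b i j)) 0 * D n (e d i - e d j)) := rfl
    rw [hLhe, hT]
    have key := est_sum (d := d) hLam0
      (fun i => A a b i i - ∑ j ∈ Finset.univ.erase i, |A a b i j|)
      (fun i j => max (A a b i j) 0) (fun i j => max (-(A a b i j)) 0)
      (fun i => ⟨sub_nonneg.mpr ((hA a b).2.1 i),
        le_trans (sub_le_self _ (Finset.sum_nonneg fun j _ => abs_nonneg _))
          (le_trans (le_abs_self _) (hAabs a b i i))⟩)
      (fun i j => ⟨le_max_right _ _,
        max_le (le_trans (le_abs_self _) (hAabs a b i j)) hLam0⟩)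
      (fun i j => ⟨le_max_right _ _,
        max_le (le_trans (le_abs_self _) (by rw [abs_neg]; exact hAabs a b i j)) hLam0⟩)
      (fun i => D n (e d i)) (fun i => M i i)
      (fun i j => D n (e d i + e d j)) (fun i j => M i i + M j j + 2 * M i j)
      (fun i j => D n (e d i - e d j)) (fun i j => M i i + M j j - 2 * M i j)
    exact key
  set C0 : ℝ := Lam * ∑ i, ∑ j, |M j i| with hC0def
  have htraceB : ∀ a b, |-((A a b * M).trace)| ≤ C0 := by
    intro a b
    rw [abs_neg]
    have htr : (A a b * M).trace = ∑ i, ∑ j, A a b i j * M j i := by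
      rw [Matrix.trace]
      exact Finset.sum_congr rfl fun i _ => by rw [Matrix.diag_apply, Matrix.mul_apply]
    rw [htr, hC0def, Finset.mul_sum]
    refine le_trans (Finset.abs_sum_le_sum_abs _ _) (Finset.sum_le_sum fun i _ => ?_)
    rw [Finset.mul_sum]
    refine le_trans (Finset.abs_sum_le_sum_abs _ _) (Finset.sum_le_sum fun j _ => ?_)
    rw [abs_mul]
    exact mul_le_mul_of_nonneg_right (hAabs a b i j) (abs_nonneg _)
  set S : ℝ := ⨆ a : ιA, ⨅ b : ιB, -((A a b * M).trace) with hSdef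
  have hFh : ∀ n, |Fh d (hs n) A φ (ys n) - S| ≤ Lam * err n := by
    intro n
    have := iSupiInf_diff_le (fun a b => -(Lh d (hs n) (A a b) φ (ys n)))
      (fun a b => -((A a b * M).trace)) (Lam * err n) C0
      (mul_nonneg hLam0 (herr0 n)) (fun a b => hest n a b) htraceB
    exact this
  have T2 : Filter.Tendsto (fun n => Fh d (hs n) A φ (ys n)) Filter.atTop (nhds S) := by
    have hK : Filter.Tendsto (fun n => Lam * err n) Filter.atTop (nhds 0) := by
      have := herrt.const_mul Lam
      simpa using this
    have h0 : Filter.Tendsto (fun n => Fh d (hs n) A φ (ys n) - S) Filter.atTop (nhds 0) :=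
      squeeze_zero_norm (fun n => by simpa [Real.norm_eq_abs] using hFh n) hK
    have := h0.add_const S
    simpa using this
  -- Part 3 : the upwind gradient term
  set p : Fin d → ℝ := fun i => fderiv ℝ φ x (e d i) with hpdef
  have hppt : ∀ i, Filter.Tendsto (fun n => (φ (ys n) - φ (ys n + hs n • e d i)) / hs n)
      Filter.atTop (nhds (-(p i))) := by
    intro i
    have h0 := (firstDiff_tendsto hφ1 x (e d i) hs ys hpos hh hy).neg
    have heq : ∀ n, -((φ (ys n + hs n • e d i) - φ (ys n)) / hs n)
        = (φ (ys n) - φ (ys n + hs n • e d i)) / hs n := by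
      intro n; rw [← neg_div, neg_sub]
    exact h0.congr heq
  have hmpt : ∀ i, Filter.Tendsto (fun n => (φ (ys n) - φ (ys n - hs n • e d i)) / hs n)
      Filter.atTop (nhds (p i)) := by
    intro i
    have h0 := (firstDiff_tendsto hφ1 x (-(e d i)) hs ys hpos hh hy).neg
    have heq : ∀ n, -((φ (ys n + hs n • -e d i) - φ (ys n)) / hs n)
        = (φ (ys n) - φ (ys n - hs n • e d i)) / hs n := by
      intro n
      rw [smul_neg, ← sub_eq_add_neg, ← neg_div, neg_sub]
    have hval : -(fderiv ℝ φ x (-(e d i))) = p i := by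
      rw [_root_.map_neg, neg_neg]
    rw [← hval]
    exact h0.congr heq
  have hUn : ∀ n, upwindSq d (hs n) φ (ys n) = ∑ i : Fin d,
      (max (max ((φ (ys n) - φ (ys n + hs n • e d i)) / hs n)
        ((φ (ys n) - φ (ys n - hs n • e d i)) / hs n)) 0) ^ 2 := by
    intro n
    rw [upwindSq, Finset.mul_sum]
    refine Finset.sum_congr rfl fun i _ => ?_
    rw [max_quot _ _ _ (hpos n), div_pow, one_div, inv_mul_eq_div]
  have hnormg : ‖gradient φ x‖ ^ 2 = ∑ i, (p i) ^ 2 := by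
    have hpg : ∀ i, p i = gradient φ x i := by
      intro i
      show fderiv ℝ φ x (e d i) = gradient φ x i
      have h1 : fderiv ℝ φ x (e d i) = inner ℝ (gradient φ x) (e d i) := by
        rw [gradient, ← InnerProductSpace.toDual_apply_apply]
        simp
      rw [h1]
      simp only [e, EuclideanSpace.inner_single_right]; simp
    rw [EuclideanSpace.norm_eq, Real.sq_sqrt (by positivity)]
    exact Finset.sum_congr rfl fun i _ => by rw [hpg i]; simp [Real.norm_eq_abs, sq_abs]
  have hUt : Filter.Tendsto (fun n => upwindSq d (hs n) φ (ys n)) Filter.atTop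
      (nhds (‖gradient φ x‖ ^ 2)) := by
    have hper : ∀ i : Fin d, Filter.Tendsto (fun n =>
        (max (max ((φ (ys n) - φ (ys n + hs n • e d i)) / hs n)
          ((φ (ys n) - φ (ys n - hs n • e d i)) / hs n)) 0) ^ 2)
        Filter.atTop (nhds ((p i) ^ 2)) := by
      intro i
      have h0 := (((hppt i).max (hmpt i)).max
        (tendsto_const_nhds : Filter.Tendsto (fun _ : ℕ => (0:ℝ)) Filter.atTop (nhds 0))).pow 2
      have hval : (max (max (-(p i)) (p i)) 0) ^ 2 = (p i) ^ 2 := by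
        rw [max_comm (-(p i)) (p i), ← abs_eq_max_neg, max_eq_left (abs_nonneg _), sq_abs]
      rw [← hval]
      exact h0
    have hsum := tendsto_finset_sum (Finset.univ : Finset (Fin d))
      (fun i (_ : i ∈ Finset.univ) => hper i)
    rw [hnormg]
    exact Filter.Tendsto.congr (fun n => (hUn n).symm) hsum
  have hposg : (0:ℝ) < ε + ‖gradient φ x‖ ^ 2 := by positivity
  have T3 : Filter.Tendsto (fun n => f (ys n) / (ε + upwindSq d (hs n) φ (ys n)) ^ (θ / 2))
      Filter.atTop (nhds (f x / (ε + ‖gradient φ x‖ ^ 2) ^ (θ / 2))) := by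
    apply Filter.Tendsto.div ((hf.tendsto x).comp hy)
    · exact (hUt.const_add ε).rpow_const (Or.inl (ne_of_gt hposg))
    · exact ne_of_gt (Real.rpow_pos_of_pos hposg _)
  exact (T1.add T2).sub T3

end Paper
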